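/- The m-th order n-dimensional Pascal tensor is a completely positive tensor. -/

import Mathlib

open Set MeasureTheory Real
open scoped NNReal ENNReal

theorem myCompactHull {E : Type*} [NormedAddCommGroup E] [NormedSpace ℝ E]
    [FiniteDimensional ℝ E] {K : Set E} (hK : IsCompact K) :
    IsCompact (convexHull ℝ K) := by
  rcases K.eq_empty_or_nonempty with rfl | ⟨k0, hk0⟩
  · simp [convexHull_empty, isCompact_empty]
  set D := Module.finrank ℝ E + 1 with hD
  have himg : convexHull ℝ K =
      (fun p : (Fin D → ℝ) × (Fin D → E) => ∑ i, p.1 i • p.2 i) ''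
        (stdSimplex ℝ (Fin D) ×ˢ Set.univ.pi fun _ => K) := by
    apply Subset.antisymm
    · intro x hx
      obtain ⟨ι, hι, z, w, hzK, hai, hw0, hw1, hwz⟩ :=
        eq_pos_convex_span_of_mem_convexHull hx
      have hcard : Fintype.card ι ≤ D :=
        hai.card_le_finrank_succ.trans (Nat.add_le_add_right (Submodule.finrank_le _) 1)
      have hcard' : Fintype.card ι ≤ Fintype.card (Fin D) := by simpa using hcard
      obtain ⟨e⟩ := Function.Embedding.nonempty_of_card_le hcard'
      classical
      set w' : Fin D → ℝ := Function.extend e w 0 with hw'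
      set z' : Fin D → E := Function.extend e z (fun _ => k0) with hz'
      have hwe : ∀ i, w' (e i) = w i := fun i => e.injective.extend_apply w 0 i
      have hze : ∀ i, z' (e i) = z i := fun i => e.injective.extend_apply z _ i
      have hvanish : ∀ j ∈ Finset.univ, j ∉ Finset.univ.image e → w' j = 0 := by
        intro j _ hj
        have : ¬ ∃ i, e i = j := by
          rintro ⟨i, rfl⟩; exact hj (Finset.mem_image_of_mem e (Finset.mem_univ i))
        simp [hw', Function.extend_apply' _ _ _ this]
      have hsum_eq : ∀ (f : Fin D → ℝ → E → E), True := fun _ => trivial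
      refine ⟨(w', z'), ⟨⟨fun j => ?_, ?_⟩, fun i _ => ?_⟩, ?_⟩
      · -- 0 ≤ w' j
        show 0 ≤ w' j
        rcases em (∃ i, e i = j) with ⟨i, rfl⟩ | hj
        · rw [hwe]; exact (hw0 i).le
        · rw [hw', Function.extend_apply' _ _ _ hj]; rfl
      · -- sum of w' = 1
        rw [← hw1]
        rw [← Finset.sum_subset (Finset.subset_univ (Finset.univ.image e)) hvanish]
        rw [Finset.sum_image (fun a _ b _ h => e.injective h)]
        exact Finset.sum_congr rfl fun i _ => hwe i
      · -- z' i ∈ K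
        show z' i ∈ K
        rcases em (∃ i', e i' = i) with ⟨i', rfl⟩ | hj
        · rw [hze]; exact hzK (Set.mem_range_self i')
        · rw [hz', Function.extend_apply' _ _ _ hj]; exact hk0
      · -- sum equals x
        show ∑ j, w' j • z' j = x
        rw [← hwz]
        rw [← Finset.sum_subset (Finset.subset_univ (Finset.univ.image e))
          (fun j hj hj' => by rw [hvanish j hj hj', zero_smul])]
        rw [Finset.sum_image (fun a _ b _ h => e.injective h)]
        exact Finset.sum_congr rfl fun i _ => by rw [hwe, hze]
    · rintro x ⟨⟨w, z⟩, ⟨⟨hw0, hw1⟩, hz⟩, rfl⟩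
      exact (convex_convexHull ℝ K).sum_mem (fun i _ => hw0 i) hw1
        (fun i _ => subset_convexHull ℝ K (hz i (Set.mem_univ i)))
  rw [himg]
  exact ((isCompact_stdSimplex _ _).prod (isCompact_univ_pi fun _ => hK)).image
    (continuous_finset_sum _ fun i _ =>
      ((continuous_apply i).comp continuous_fst).smul
        ((continuous_apply i).comp continuous_snd))

lemma myFactIntegrable (s : ℕ) :
    IntegrableOn (fun t : ℝ => Real.exp (-t) * t ^ s) (Ioi (0:ℝ)) := by
  have h := Real.GammaIntegral_convergent (s := (s:ℝ)+1) (by positivity)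
  refine h.congr_fun (fun x hx => ?_) measurableSet_Ioi
  rw [add_sub_cancel_right]; beta_reduce; rw [Real.rpow_natCast]

lemma myFactIntegral (s : ℕ) :
    ∫ t in Ioi (0:ℝ), Real.exp (-t) * t ^ s = (s.factorial : ℝ) := by
  have h := Real.Gamma_eq_integral (s := (s:ℝ)+1) (by positivity)
  have h2 : Real.Gamma ((s:ℝ)+1) = (s.factorial : ℝ) := by
    exact_mod_cast Real.Gamma_nat_eq_factorial s
  rw [h2] at h
  rw [h]
  refine setIntegral_congr_fun measurableSet_Ioi (fun x hx => ?_)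
  rw [add_sub_cancel_right, Real.rpow_natCast]

/-- The m-th order n-dimensional Pascal tensor is completely positive. -/
theorem pascal_tensor_cp (m n : ℕ)
    (P : (Fin m → Fin n) → ℝ)
    (hP : ∀ idx : Fin m → Fin n,
      P idx = ((∑ j, (idx j : ℕ)).factorial : ℝ) / ∏ j, ((idx j : ℕ).factorial : ℝ)) :
    ∃ (r : ℕ) (u : Fin r → Fin n → ℝ),
      (∀ k i, 0 ≤ u k i) ∧ ∀ idx, P idx = ∑ k, ∏ j, u k (idx j) := by
  classical
  rcases Nat.eq_zero_or_pos m with rfl | hm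
  · refine ⟨1, fun _ _ => 1, fun _ _ => zero_le_one, fun idx => ?_⟩
    simp [hP idx]
  rcases Nat.eq_zero_or_pos n with rfl | hn
  · exact ⟨0, fun k => k.elim0, fun k => k.elim0, fun idx => (idx ⟨0, hm⟩).elim0⟩
  have hm0 : (m : ℝ) ≠ 0 := Nat.cast_ne_zero.mpr hm.ne'
  -- the normalizing function
  set σ : ℝ → ℝ := fun t => ∑ a : Fin n, |t| ^ (a : ℕ) / ((a : ℕ).factorial : ℝ) with hσdef
  have hσ_cont : Continuous σ :=
    continuous_finset_sum _ fun a _ => (continuous_abs.pow _).div_const _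
  have hσ_ge : ∀ t, (1 : ℝ) ≤ σ t := by
    intro t
    have h0 : |t| ^ ((⟨0, hn⟩ : Fin n) : ℕ) / (((⟨0, hn⟩ : Fin n) : ℕ).factorial : ℝ) = 1 := by
      simp
    calc (1:ℝ) = |t| ^ ((⟨0, hn⟩ : Fin n) : ℕ) / (((⟨0, hn⟩ : Fin n) : ℕ).factorial : ℝ) :=
          h0.symm
      _ ≤ σ t := Finset.single_le_sum
          (f := fun a : Fin n => |t| ^ (a : ℕ) / ((a : ℕ).factorial : ℝ))
          (fun a _ => by positivity) (Finset.mem_univ _)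
  have hσ_pos : ∀ t, 0 < σ t := fun t => lt_of_lt_of_le one_pos (hσ_ge t)
  -- the normalized moment vector
  set v : ℝ → Fin n → ℝ := fun t a => (|t| ^ (a : ℕ) / ((a : ℕ).factorial : ℝ)) / σ t with hvdef
  have hv_nonneg : ∀ t a, 0 ≤ v t a := fun t a => by
    have := hσ_pos t
    have : (0:ℝ) < σ t := this
    positivity
  have hv_sum : ∀ t, ∑ a, v t a = 1 := fun t => by
    simp only [hvdef, ← Finset.sum_div]
    exact div_self (hσ_pos t).ne'
  have hv_mem : ∀ t, v t ∈ stdSimplex ℝ (Fin n) := fun t => ⟨fun a => hv_nonneg t a, hv_sum t⟩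
  have hv_le1 : ∀ t a, v t a ≤ 1 := fun t a => by
    have h := Finset.single_le_sum (f := fun a => v t a)
      (fun b _ => hv_nonneg t b) (Finset.mem_univ a)
    rwa [hv_sum t] at h
  -- the rank-one tensor map
  set Φ : (Fin n → ℝ) → ((Fin m → Fin n) → ℝ) := fun z idx => ∏ j, z (idx j) with hΦdef
  have hΦ_cont : Continuous Φ :=
    continuous_pi fun idx => continuous_finset_prod _ fun j _ => continuous_apply (idx j)
  set K : Set ((Fin m → Fin n) → ℝ) := Φ '' stdSimplex ℝ (Fin n) with hKdef
  have hK_comp : IsCompact K := (isCompact_stdSimplex _ _).image hΦ_cont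
  have hHull_comp : IsCompact (convexHull ℝ K) := myCompactHull hK_comp
  set G : ℝ → ((Fin m → Fin n) → ℝ) := fun t => Φ (v t) with hGdef
  have hG_cont : Continuous G := by
    refine hΦ_cont.comp (continuous_pi fun a => ?_)
    exact ((continuous_abs.pow _).div_const _).div hσ_cont fun t => (hσ_pos t).ne'
  have hG_memK : ∀ t, G t ∈ K := fun t => ⟨v t, hv_mem t, rfl⟩
  -- the density
  set ρr : ℝ → ℝ := fun t => Real.exp (-t) * σ t ^ m with hρrdef
  have hρr_pos : ∀ t, 0 < ρr t := fun t => by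
    have h1 : (0:ℝ) < σ t := hσ_pos t
    positivity
  have hρr_cont : Continuous ρr := (Real.continuous_exp.comp continuous_neg).mul (hσ_cont.pow m)
  set ρ : ℝ → ℝ≥0 := fun t => Real.toNNReal (ρr t) with hρdef
  have hρ_meas : Measurable ρ := hρr_cont.measurable.real_toNNReal
  -- expansion of σ ^ m
  have hσ_pow : ∀ t : ℝ, σ t ^ m
      = ∑ g : Fin m → Fin n, ∏ j, (|t| ^ ((g j : ℕ)) / (((g j : ℕ)).factorial : ℝ)) := by
    intro t
    rw [← Fintype.prod_sum (fun (_ : Fin m) (a : Fin n) =>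
      |t| ^ (a : ℕ) / ((a : ℕ).factorial : ℝ))]
    simp [Finset.prod_const]
    rfl
  -- per-multi-index constants
  set c : (Fin m → Fin n) → ℝ := fun g => (∏ j, (((g j : ℕ)).factorial : ℝ))⁻¹ with hcdef
  have hkey : ∀ (g : Fin m → Fin n), ∀ t ∈ Ioi (0:ℝ),
      Real.exp (-t) * ∏ j, (|t| ^ ((g j : ℕ)) / (((g j : ℕ)).factorial : ℝ))
        = c g * (Real.exp (-t) * t ^ (∑ j, (g j : ℕ))) := by
    intro g t ht
    have ht' : (0:ℝ) < t := ht
    rw [abs_of_pos ht', Finset.prod_div_distrib, Finset.prod_pow_eq_pow_sum]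
    rw [hcdef]
    ring
  -- integrability of the density
  have hρr_int : IntegrableOn ρr (Ioi (0:ℝ)) := by
    have hint : IntegrableOn
        (fun t => ∑ g : Fin m → Fin n, c g * (Real.exp (-t) * t ^ (∑ j, (g j : ℕ))))
        (Ioi (0:ℝ)) :=
      integrable_finset_sum _ fun g _ => (myFactIntegrable (∑ j, (g j : ℕ))).const_mul _
    refine hint.congr_fun (fun t ht => ?_) measurableSet_Ioi
    rw [hρrdef]
    simp only
    rw [hσ_pow t, Finset.mul_sum]
    exact (Finset.sum_congr rfl fun g _ => hkey g t ht).symm ▸ rfl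
  -- the measure
  set μ0 : Measure ℝ := volume.restrict (Ioi (0:ℝ)) with hμ0def
  set ν : Measure ℝ := μ0.withDensity (fun t => (ρ t : ℝ≥0∞)) with hνdef
  have hcoe : ∀ t, ((ρ t : ℝ≥0) : ℝ≥0∞) = ENNReal.ofReal (ρr t) := fun t => rfl
  have hν_univ : ν Set.univ = ∫⁻ t, ENNReal.ofReal (ρr t) ∂μ0 := by
    rw [hνdef, withDensity_apply _ MeasurableSet.univ, setLIntegral_univ]
    exact lintegral_congr fun t => hcoe t
  have hν_lt : ν Set.univ < ⊤ := by
    rw [hν_univ]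
    exact hρr_int.lintegral_lt_top
  haveI : IsFiniteMeasure ν := ⟨hν_lt⟩
  have hν_ge1 : 1 ≤ ν Set.univ := by
    rw [hν_univ]
    have hmono : ∫⁻ t, ENNReal.ofReal (Real.exp (-t)) ∂μ0
        ≤ ∫⁻ t, ENNReal.ofReal (ρr t) ∂μ0 := by
      refine lintegral_mono fun t => ENNReal.ofReal_le_ofReal ?_
      have h1 : (1:ℝ) ≤ σ t ^ m := one_le_pow₀ (hσ_ge t)
      calc Real.exp (-t) = Real.exp (-t) * 1 := (mul_one _).symm
        _ ≤ ρr t := by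
            rw [hρrdef]
            exact mul_le_mul_of_nonneg_left h1 (Real.exp_nonneg _)
    refine le_trans (le_of_eq ?_) hmono
    have hie : IntegrableOn (fun t : ℝ => Real.exp (-t)) (Ioi 0) := by
      have := myFactIntegrable 0
      simpa using this
    rw [← ofReal_integral_eq_lintegral_ofReal hie
      (Filter.Eventually.of_forall fun t => (Real.exp_pos _).le)]
    rw [integral_exp_neg_Ioi_zero]
    simp
  have hν_ne : ν Set.univ ≠ 0 := fun h => by simp [h] at hν_ge1
  haveI : NeZero ν := ⟨fun h => hν_ne (by simp [h])⟩
  set Z : ℝ := (ν Set.univ).toReal with hZdef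
  have hZ_pos : 0 < Z := ENNReal.toReal_pos hν_ne hν_lt.ne
  -- integrability of G
  have hG_int : Integrable G ν := by
    refine (integrable_const (1:ℝ)).mono' hG_cont.aestronglyMeasurable
      (Filter.Eventually.of_forall fun t => ?_)
    rw [pi_norm_le_iff_of_nonneg zero_le_one]
    intro idx
    rw [Real.norm_eq_abs, abs_of_nonneg (Finset.prod_nonneg fun j _ => hv_nonneg t (idx j))]
    exact Finset.prod_le_one (fun j _ => hv_nonneg t (idx j)) (fun j _ => hv_le1 t (idx j))
  -- the average lies in the hull
  have havg : (⨍ t, G t ∂ν) ∈ convexHull ℝ K :=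
    (convex_convexHull ℝ K).average_mem hHull_comp.isClosed
      (Filter.Eventually.of_forall fun t => subset_convexHull ℝ K (hG_memK t)) hG_int
  -- the integral equals P
  have hsmul_int : Integrable (fun t => ρ t • G t) μ0 :=
    (integrable_withDensity_iff_integrable_smul hρ_meas).mp hG_int
  have hIP : ∫ t, G t ∂ν = P := by
    rw [hνdef, integral_withDensity_eq_integral_smul hρ_meas]
    funext idx
    have happ : (∫ t, ρ t • G t ∂μ0) idx = ∫ t, (ρ t • G t) idx ∂μ0 :=
      ((ContinuousLinearMap.proj (R := ℝ) (φ := fun _ : (Fin m → Fin n) => ℝ)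
        idx).integral_comp_comm hsmul_int).symm
    rw [happ]
    have hpt : ∀ t ∈ Ioi (0:ℝ),
        (ρ t • G t) idx = c idx * (Real.exp (-t) * t ^ (∑ j, (idx j : ℕ))) := by
      intro t ht
      have hσm : (σ t) ^ m ≠ 0 := pow_ne_zero _ (hσ_pos t).ne'
      have : (ρ t • G t) idx = ρr t * ∏ j, v t (idx j) := by
        simp [NNReal.smul_def, Real.coe_toNNReal _ (hρr_pos t).le, hGdef, hΦdef]
        exact Or.inl (Real.coe_toNNReal _ (hρr_pos t).le)
      rw [this]
      have hprod : ∏ j, v t (idx j)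
          = (∏ j, (|t| ^ ((idx j : ℕ)) / (((idx j : ℕ)).factorial : ℝ))) / (σ t) ^ m := by
        rw [hvdef]
        simp only
        rw [Finset.prod_div_distrib, Finset.prod_const, Finset.card_univ, Fintype.card_fin]
      rw [hprod]
      have hk := hkey idx t ht
      calc ρr t * ((∏ j, |t| ^ ((idx j : ℕ)) / (((idx j : ℕ)).factorial : ℝ)) / σ t ^ m)
          = Real.exp (-t) * ∏ j, |t| ^ ((idx j : ℕ)) / (((idx j : ℕ)).factorial : ℝ) := by
            rw [hρrdef]
            field_simp
        _ = c idx * (Real.exp (-t) * t ^ (∑ j, (idx j : ℕ))) := hk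
    rw [setIntegral_congr_fun measurableSet_Ioi hpt, integral_const_mul, myFactIntegral,
      hP idx, hcdef]
    rw [div_eq_mul_inv, mul_comm]
  -- P is a positive multiple of a point of the hull
  have hPZ : P = Z • (⨍ t, G t ∂ν) := by
    rw [average_eq, hIP, smul_smul, show ν.real univ = Z from rfl, mul_inv_cancel₀ hZ_pos.ne', one_smul]
  -- unpack the convex hull membership
  obtain ⟨ι, hι, w, z, hw0, hw1, hzK, hq⟩ := mem_convexHull_iff_exists_fintype.mp havg
  choose ζ hζmem hζeq using fun i => hzK i
  set r : ℕ := Fintype.card ι with hrdef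
  set e : Fin r ≃ ι := (Fintype.equivFin ι).symm with hedef
  have hpow : ∀ x : ℝ, 0 ≤ x → (x ^ ((m : ℝ)⁻¹)) ^ m = x := by
    intro x hx
    rw [← Real.rpow_natCast (x ^ ((m : ℝ)⁻¹)) m, ← Real.rpow_mul hx,
      inv_mul_cancel₀ hm0, Real.rpow_one]
  refine ⟨r, fun k a => (Z * w (e k)) ^ ((m : ℝ)⁻¹) * ζ (e k) a, fun k a => ?_, fun idx => ?_⟩
  · exact mul_nonneg (Real.rpow_nonneg (mul_nonneg hZ_pos.le (hw0 _)) _) ((hζmem (e k)).1 a)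
  · have hPidx : P idx = Z * ∑ i, w i * z i idx := by
      rw [hPZ]
      rw [← hq]
      simp [Finset.mul_sum, Finset.sum_apply]
    rw [hPidx, Finset.mul_sum]
    rw [← Equiv.sum_comp e (fun i => Z * (w i * z i idx))]
    refine Finset.sum_congr rfl fun k _ => ?_
    rw [Finset.prod_mul_distrib, Finset.prod_const, Finset.card_univ, Fintype.card_fin,
      hpow _ (mul_nonneg hZ_pos.le (hw0 _))]
    rw [← hζeq (e k)]
    rw [hΦdef]
    ring
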